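/- For every real p > 0, every greedy cover φ' of a set cover instance and every cover φ of the same instance satisfy M_p(φ) ≤ (p+1)^{1/p} · M_p(φ'). In other words, the greedy algorithm approximates the maximum p-mean set cover problem within a factor of (p+1)^{1/p}. -/

import Mathlib

open Finset

lemma lemB (p : ℝ) (hp : 0 ≤ p) (c : ℕ) :
    (c : ℝ) ^ (p + 1) / (p + 1) ≤ ∑ t ∈ Finset.range c, ((t : ℝ) + 1) ^ p := by
  have hp1 : (0:ℝ) < p + 1 := by linarith
  induction c with
  | zero => simp [Real.zero_rpow hp1.ne']
  | succ n ih =>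
    rw [Finset.sum_range_succ]
    have hx : (0:ℝ) < (n:ℝ) + 1 := by positivity
    have key : ((n:ℝ) + 1) ^ (p+1) - (p+1) * ((n:ℝ)+1) ^ p ≤ (n:ℝ) ^ (p+1) := by
      have hb := one_add_mul_self_le_rpow_one_add
        (s := -(1/((n:ℝ)+1))) (p := p+1)
        (by rw [neg_le, neg_neg]; rw [div_le_one hx]; linarith) (by linarith)
      have h1s : 1 + -(1/((n:ℝ)+1)) = (n:ℝ)/((n:ℝ)+1) := by field_simp; ring
      rw [h1s, Real.div_rpow (by positivity) hx.le] at hb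
      have h2 : (1 + (p+1) * -(1/((n:ℝ)+1))) * ((n:ℝ)+1)^(p+1) ≤ (n:ℝ)^(p+1) := by
        rw [← le_div_iff₀ (Real.rpow_pos_of_pos hx _)]
        exact hb
      have h3 : ((n:ℝ)+1)^(p+1) = ((n:ℝ)+1)^p * ((n:ℝ)+1) := by
        rw [Real.rpow_add hx, Real.rpow_one]
      have h4 : (1 + (p+1) * -(1/((n:ℝ)+1))) * ((n:ℝ)+1)^(p+1)
          = ((n:ℝ)+1)^(p+1) - (p+1)*((n:ℝ)+1)^p := by
        rw [h3]; field_simp; ring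
      linarith [h2, h4.symm.le]
    push_cast
    rw [div_le_iff₀ hp1] at *
    nlinarith [ih]

lemma lemA {V : Type*} [DecidableEq V] (p : ℝ) (hp : 0 ≤ p) (f : V → ℕ) :
    ∀ (n : ℕ) (Q : Finset V), Q.card = n →
    ∑ t ∈ Finset.range n, ((t:ℝ)+1)^p ≤ ∑ v ∈ Q, ((Q.filter fun w => f v ≤ f w).card : ℝ)^p := by
  intro n
  induction n with
  | zero => intro Q hQ; simp [Finset.card_eq_zero.mp hQ]
  | succ n ih =>
    intro Q hQ
    have hne : Q.Nonempty := Finset.card_pos.mp (by omega)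
    obtain ⟨v₀, hv₀Q, hv₀min⟩ := Finset.exists_min_image Q f hne
    have hfull : Q.filter (fun w => f v₀ ≤ f w) = Q :=
      Finset.filter_true_of_mem fun w hw => hv₀min w hw
    have hsplit := Finset.add_sum_erase Q (fun v => ((Q.filter fun w => f v ≤ f w).card : ℝ)^p) hv₀Q
    rw [← hsplit, Finset.sum_range_succ]
    have hcard : ((Q.erase v₀).card : ℕ) = n := by
      rw [Finset.card_erase_of_mem hv₀Q, hQ]; omega
    have h1 : ((n:ℝ)+1)^p ≤ ((Q.filter fun w => f v₀ ≤ f w).card : ℝ)^p := by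
      rw [hfull, hQ]; push_cast; exact le_rfl
    have h2 : ∑ t ∈ Finset.range n, ((t:ℝ)+1)^p
        ≤ ∑ v ∈ Q.erase v₀, ((Q.filter fun w => f v ≤ f w).card : ℝ)^p := by
      refine (ih (Q.erase v₀) hcard).trans (Finset.sum_le_sum fun v hv => ?_)
      apply Real.rpow_le_rpow (by positivity) _ hp
      exact_mod_cast Finset.card_le_card
        (Finset.filter_subset_filter _ (Finset.erase_subset _ _))
    linarith


/-- A set cover instance: a collection of subsets of a finite ground set `V` whose union is `V`. -/
structure SetCoverInstance (V : Type*) [Fintype V] [DecidableEq V] where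
  sets : Finset (Finset V)
  covers : ∀ v : V, ∃ S ∈ sets, v ∈ S

/-- A cover: an assignment of each element to a subset of the collection containing it. -/
structure Cover {V : Type*} [Fintype V] [DecidableEq V] (I : SetCoverInstance V) where
  φ : V → Finset V
  mem_sets : ∀ v, φ v ∈ I.sets
  self_mem : ∀ v, v ∈ φ v

variable {V : Type*} [Fintype V] [DecidableEq V] {I : SetCoverInstance V}

/-- `a_v`: the size of the part containing `v`. -/
def Cover.a (c : Cover I) (v : V) : ℕ :=
  (Finset.univ.filter fun w => c.φ w = c.φ v).card

/-- `c_i`: the size of the part assigned to subset `S`. -/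
def Cover.partSize (c : Cover I) (S : Finset V) : ℕ :=
  (Finset.univ.filter fun w => c.φ w = S).card

/-- A greedy cover: its parts can be ordered `P 0, …, P (m-1)` so that each `P j` is obtained by
choosing a subset covering a maximum number of yet-uncovered elements. -/
def Cover.IsGreedy (c : Cover I) : Prop :=
  ∃ (m : ℕ) (P : ℕ → Finset V),
    (∀ v : V, ∃ j < m, v ∈ P j) ∧
    (∀ j < m, ∃ S ∈ I.sets,
      P j = S \ (Finset.range j).biUnion P ∧
      ∀ T ∈ I.sets, (T \ (Finset.range j).biUnion P).card ≤ (P j).card) ∧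
    (∀ j < m, ∀ v ∈ P j, (Finset.univ.filter fun w => c.φ w = c.φ v) = P j)

/-- The generalized `p`-mean of the part sizes `a_v`, over the elements. -/
noncomputable def Cover.pMean (c : Cover I) (p : ℝ) : ℝ :=
  ((1 / (Fintype.card V : ℝ)) * ∑ v : V, (c.a v : ℝ) ^ p) ^ (1 / p)

/-- for every `p > 0`, every greedy cover `c'` and every cover `c`,
`M_p(c) ≤ (p+1)^{1/p} · M_p(c')`: greedy approximates maximum `p`-mean set cover
within a factor `(p+1)^{1/p}`. -/
theorem greedy_pMean_approx_const (p : ℝ) (hp : 0 < p)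
    (c' : Cover I) (hc' : c'.IsGreedy) (c : Cover I) :
    c.pMean p ≤ (p + 1) ^ (1 / p) * c'.pMean p := by
  have hp1 : (0:ℝ) < p + 1 := by linarith
  obtain ⟨m, P, hcov, hgr, hfib⟩ := hc'
  classical
  set jv : V → ℕ := fun v => Nat.find (hcov v) with hjv
  have hjm : ∀ v : V, jv v < m ∧ v ∈ P (jv v) := fun v => Nat.find_spec (hcov v)
  have hmin : ∀ (v : V) (i : ℕ), i < jv v → ¬(i < m ∧ v ∈ P i) :=
    fun v i hi => Nat.find_min (hcov v) hi
  -- a' v = card of the greedy part containing v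
  have ha' : ∀ v : V, c'.a v = (P (jv v)).card := by
    intro v
    unfold Cover.a
    rw [hfib (jv v) (hjm v).1 v (hjm v).2]
  -- key inequality
  have hkey2 : ∀ v : V,
      ((Finset.univ.filter fun w => c.φ w = c.φ v).filter fun w => jv v ≤ jv w).card ≤ c'.a v := by
    intro v
    obtain ⟨S, hS, hPj, hmax⟩ := hgr (jv v) (hjm v).1
    have hsub : ((Finset.univ.filter fun w => c.φ w = c.φ v).filter fun w => jv v ≤ jv w)
        ⊆ c.φ v \ (Finset.range (jv v)).biUnion P := by
      intro w hw
      simp only [Finset.mem_filter, Finset.mem_univ, true_and] at hw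
      obtain ⟨hφ, hjw⟩ := hw
      rw [Finset.mem_sdiff]
      refine ⟨hφ ▸ c.self_mem w, ?_⟩
      rw [Finset.mem_biUnion]
      push_neg
      intro i hi hwP
      rw [Finset.mem_range] at hi
      exact hmin w i (lt_of_lt_of_le hi hjw)
        ⟨lt_of_lt_of_le hi (hjw.trans (hjm w).1.le), hwP⟩
    calc ((Finset.univ.filter fun w => c.φ w = c.φ v).filter fun w => jv v ≤ jv w).card
        ≤ (c.φ v \ (Finset.range (jv v)).biUnion P).card := Finset.card_le_card hsub
      _ ≤ (P (jv v)).card := hmax (c.φ v) (c.mem_sets v)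
      _ = c'.a v := (ha' v).symm
  -- per-part inequality
  have hC : ∀ v : V, ((c.a v : ℝ)) ^ (p+1)
      ≤ (p+1) * ∑ w ∈ Finset.univ.filter (fun u => c.φ u = c.φ v), ((c'.a w : ℝ))^p := by
    intro v
    set Q := Finset.univ.filter (fun u => c.φ u = c.φ v) with hQdef
    have h1 : (c.a v : ℝ)^(p+1)/(p+1) ≤ ∑ t ∈ Finset.range Q.card, ((t:ℝ)+1)^p := by
      have : c.a v = Q.card := rfl
      rw [this]
      exact lemB p hp.le Q.card
    have h2 := lemA p hp.le jv Q.card Q rfl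
    have h3 : ∑ w ∈ Q, ((Q.filter fun u => jv w ≤ jv u).card : ℝ)^p
        ≤ ∑ w ∈ Q, ((c'.a w : ℝ))^p := by
      apply Finset.sum_le_sum
      intro w hw
      apply Real.rpow_le_rpow (by positivity) _ hp.le
      have hwφ : c.φ w = c.φ v := by
        simpa [hQdef] using hw
      have hQw : Q = Finset.univ.filter (fun u => c.φ u = c.φ w) := by
        rw [hQdef, hwφ]
      rw [hQw]
      exact_mod_cast hkey2 w
    have htot := (h1.trans h2).trans h3
    rw [div_le_iff₀ hp1] at htot
    linarith
  -- summing over fibers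
  have hsum : ∑ v : V, ((c.a v : ℝ))^p ≤ (p+1) * ∑ v : V, ((c'.a v : ℝ))^p := by
    have hf1 := Finset.sum_fiberwise_of_maps_to
      (g := c.φ) (s := Finset.univ) (t := Finset.univ.image c.φ)
      (fun x _ => Finset.mem_image_of_mem _ (Finset.mem_univ x))
      (fun v => ((c.a v : ℝ))^p)
    have hf2 := Finset.sum_fiberwise_of_maps_to
      (g := c.φ) (s := Finset.univ) (t := Finset.univ.image c.φ)
      (fun x _ => Finset.mem_image_of_mem _ (Finset.mem_univ x))
      (fun v => ((c'.a v : ℝ))^p)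
    rw [← hf1, ← hf2, Finset.mul_sum]
    apply Finset.sum_le_sum
    intro S hS
    obtain ⟨v₀, -, hv₀⟩ := Finset.mem_image.mp hS
    have hfe : Finset.univ.filter (fun w => c.φ w = S)
        = Finset.univ.filter (fun w => c.φ w = c.φ v₀) := by rw [hv₀]
    have hconst : ∀ w ∈ Finset.univ.filter (fun u => c.φ u = c.φ v₀), c.a w = c.a v₀ := by
      intro w hw
      simp only [Finset.mem_filter, Finset.mem_univ, true_and] at hw
      unfold Cover.a
      rw [hw]
    have hmem : v₀ ∈ Finset.univ.filter (fun u => c.φ u = c.φ v₀) := by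
      simp
    have hcardpos : 0 < c.a v₀ := Finset.card_pos.mpr ⟨v₀, hmem⟩
    have hstep : ∑ w ∈ Finset.univ.filter (fun w => c.φ w = S), ((c.a w : ℝ))^p
        = ((c.a v₀ : ℝ))^(p+1) := by
      rw [hfe]
      rw [Finset.sum_congr rfl (fun w hw => by rw [hconst w hw])]
      rw [Finset.sum_const]
      have : (Finset.univ.filter (fun u => c.φ u = c.φ v₀)).card = c.a v₀ := rfl
      rw [this, nsmul_eq_mul]
      rw [Real.rpow_add (by exact_mod_cast hcardpos), Real.rpow_one]
      ring
    rw [hstep, hfe]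
    exact hC v₀
  -- conclude
  unfold Cover.pMean
  have hA' : (0:ℝ) ≤ ∑ v : V, ((c'.a v : ℝ))^p :=
    Finset.sum_nonneg fun v _ => by positivity
  have hn : (0:ℝ) ≤ 1 / (Fintype.card V : ℝ) := by positivity
  have hmono : (1 / (Fintype.card V : ℝ)) * ∑ v : V, ((c.a v : ℝ))^p
      ≤ (p+1) * ((1 / (Fintype.card V : ℝ)) * ∑ v : V, ((c'.a v : ℝ))^p) := by
    calc (1 / (Fintype.card V : ℝ)) * ∑ v : V, ((c.a v : ℝ))^p
        ≤ (1 / (Fintype.card V : ℝ)) * ((p+1) * ∑ v : V, ((c'.a v : ℝ))^p) :=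
          mul_le_mul_of_nonneg_left hsum hn
      _ = (p+1) * ((1 / (Fintype.card V : ℝ)) * ∑ v : V, ((c'.a v : ℝ))^p) := by ring
  calc ((1 / (Fintype.card V : ℝ)) * ∑ v : V, ((c.a v : ℝ))^p) ^ (1/p)
      ≤ ((p+1) * ((1 / (Fintype.card V : ℝ)) * ∑ v : V, ((c'.a v : ℝ))^p)) ^ (1/p) := by
        apply Real.rpow_le_rpow _ hmono (by positivity)
        exact mul_nonneg hn (Finset.sum_nonneg fun v _ => by positivity)
    _ = (p+1)^(1/p) * ((1 / (Fintype.card V : ℝ)) * ∑ v : V, ((c'.a v : ℝ))^p) ^ (1/p) :=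
        Real.mul_rpow hp1.le (mul_nonneg hn hA')
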